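/- Let p and m be natural numbers with 1 ≤ m ≤ p, and let τ₀ ≤ τ₁ ≤ … ≤ τ_{p+1} be a nondecreasing sequence of real numbers in which every value occurs at most m times. Then the Cox–de Boor B-spline B[τ₀,…,τ_{p+1}] is (p − m)-times continuously differentiable on ℝ. In particular, for p = 2s+1 and knot multiplicities at most s+1, the B-spline is of smoothness class C^s. -/

import Mathlib

open Filter Set Topology

/-- The Cox–de Boor B-spline of degree `p` with local knot vector `τ₀, …, τ_{p+1}`. -/
noncomputable def coxDeBoor : (p : ℕ) → (Fin (p + 2) → ℝ) → ℝ → ℝ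
  | 0, τ, x => if τ 0 ≤ x ∧ x < τ 1 then 1 else 0
  | p + 1, τ, x =>
      (if τ ⟨p + 1, by omega⟩ - τ 0 = 0 then 0
        else (x - τ 0) / (τ ⟨p + 1, by omega⟩ - τ 0) *
          coxDeBoor p (fun i => τ i.castSucc) x) +
      (if τ ⟨p + 2, by omega⟩ - τ 1 = 0 then 0
        else (τ ⟨p + 2, by omega⟩ - x) / (τ ⟨p + 2, by omega⟩ - τ 1) *
          coxDeBoor p (fun i => τ i.succ) x)

noncomputable def sinv (t : ℝ) : ℝ := if t = 0 then 0 else t⁻¹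

lemma sinv_of_ne {t : ℝ} (h : t ≠ 0) : sinv t = t⁻¹ := if_neg h

lemma coxDeBoor_succ (p : ℕ) (τ : Fin (p + 3) → ℝ) :
    coxDeBoor (p + 1) τ = fun x =>
      (x - τ 0) * sinv (τ ⟨p + 1, by omega⟩ - τ 0) * coxDeBoor p (fun i => τ i.castSucc) x +
      (τ ⟨p + 2, by omega⟩ - x) * sinv (τ ⟨p + 2, by omega⟩ - τ 1) *
        coxDeBoor p (fun i => τ i.succ) x := by
  funext x
  show (if _ then _ else _) + (if _ then _ else _) = _
  unfold sinv
  split_ifs <;> field_simp <;> ring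

lemma coxDeBoor_succ_apply (p : ℕ) (τ : Fin (p + 3) → ℝ) (x : ℝ) :
    coxDeBoor (p + 1) τ x =
      (x - τ 0) * sinv (τ ⟨p + 1, by omega⟩ - τ 0) * coxDeBoor p (fun i => τ i.castSucc) x +
      (τ ⟨p + 2, by omega⟩ - x) * sinv (τ ⟨p + 2, by omega⟩ - τ 1) *
        coxDeBoor p (fun i => τ i.succ) x := by
  rw [coxDeBoor_succ]

lemma mono_castSucc {n : ℕ} {τ : Fin (n + 1) → ℝ} (h : Monotone τ) :
    Monotone (fun i : Fin n => τ i.castSucc) := fun i j hij => h (by simpa using hij)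

lemma mono_succ {n : ℕ} {τ : Fin (n + 1) → ℝ} (h : Monotone τ) :
    Monotone (fun i : Fin n => τ i.succ) := fun i j hij => h (by simpa using hij)

theorem coxDeBoor_support : ∀ {p : ℕ} {τ : Fin (p + 2) → ℝ}, Monotone τ → ∀ {x : ℝ},
    (x < τ 0 ∨ τ ⟨p + 1, by omega⟩ ≤ x) → coxDeBoor p τ x = 0 := by
  intro p
  induction p with
  | zero =>
    intro τ hτ x hx
    show (if τ 0 ≤ x ∧ x < τ 1 then (1:ℝ) else 0) = 0
    rw [if_neg]
    rintro ⟨h1, h2⟩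
    have h01 : (⟨0 + 1, by omega⟩ : Fin 2) = 1 := rfl
    rw [h01] at hx
    rcases hx with h | h <;> linarith
  | succ q ih =>
    intro τ hτ x hx
    rw [coxDeBoor_succ]
    have h12 : τ ⟨q + 1, by omega⟩ ≤ τ ⟨q + 2, by omega⟩ := hτ (by simp [Fin.le_def])
    have h01 : τ 0 ≤ τ 1 := hτ (by simp [Fin.le_def])
    have hL : coxDeBoor q (fun i => τ i.castSucc) x = 0 := by
      apply ih (mono_castSucc hτ)
      rcases hx with h | h
      · left; simpa using h
      · right; simpa [Fin.castSucc_mk] using le_trans h12 h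
    have hR : coxDeBoor q (fun i => τ i.succ) x = 0 := by
      apply ih (mono_succ hτ)
      rcases hx with h | h
      · left; simpa [Fin.succ_zero_eq_one] using lt_of_lt_of_le h h01
      · right; simpa [Fin.succ_mk] using h
    simp [hL, hR]


lemma aux_bound {lo hi x B M : ℝ} (hB : |B| ≤ M) (hsupp : ¬(lo ≤ x ∧ x < hi) → B = 0) :
    |(x - lo) * sinv (hi - lo) * B| ≤ M ∧ |(hi - x) * sinv (hi - lo) * B| ≤ M := by
  have hM : 0 ≤ M := le_trans (abs_nonneg _) hB
  by_cases h0 : B = 0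
  · simp [h0, hM]
  · have hs : lo ≤ x ∧ x < hi := by
      by_contra hc; exact h0 (hsupp hc)
    have hlohi : lo < hi := hs.1.trans_lt hs.2
    rw [sinv_of_ne (by intro h; nlinarith), ← div_eq_mul_inv, ← div_eq_mul_inv]
    constructor
    · rw [abs_mul]
      calc |(x - lo) / (hi - lo)| * |B| ≤ 1 * M := by
            apply mul_le_mul _ hB (abs_nonneg _) zero_le_one
            rw [abs_le]
            constructor
            · have : 0 ≤ (x - lo) / (hi - lo) := div_nonneg (by linarith) (by linarith)
              linarith
            · rw [div_le_one (by linarith)]; linarith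
        _ = M := one_mul M
    · rw [abs_mul]
      calc |(hi - x) / (hi - lo)| * |B| ≤ 1 * M := by
            apply mul_le_mul _ hB (abs_nonneg _) zero_le_one
            rw [abs_le]
            constructor
            · have : 0 ≤ (hi - x) / (hi - lo) := div_nonneg (by linarith) (by linarith)
              linarith
            · rw [div_le_one (by linarith)]; linarith
        _ = M := one_mul M

theorem coxDeBoor_abs_le : ∀ {p : ℕ} {τ : Fin (p + 2) → ℝ}, Monotone τ → ∀ (x : ℝ),
    |coxDeBoor p τ x| ≤ 2 ^ p := by
  intro p
  induction p with
  | zero =>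
    intro τ hτ x
    show |if τ 0 ≤ x ∧ x < τ 1 then (1:ℝ) else 0| ≤ 2 ^ 0
    split_ifs <;> simp
  | succ q ih =>
    intro τ hτ x
    rw [coxDeBoor_succ]
    have hb1 : |(x - τ 0) * sinv (τ ⟨q + 1, by omega⟩ - τ 0) *
        coxDeBoor q (fun i => τ i.castSucc) x| ≤ 2 ^ q := by
      refine (aux_bound (ih (mono_castSucc hτ) x) ?_).1
      intro hc
      apply coxDeBoor_support (mono_castSucc hτ)
      push_neg at hc
      rcases le_or_gt (τ 0) x with h | h
      · right; simpa [Fin.castSucc_mk] using hc h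
      · left; simpa using h
    have hb2 : |(τ ⟨q + 2, by omega⟩ - x) * sinv (τ ⟨q + 2, by omega⟩ - τ 1) *
        coxDeBoor q (fun i => τ i.succ) x| ≤ 2 ^ q := by
      refine (aux_bound (ih (mono_succ hτ) x) ?_).2
      intro hc
      apply coxDeBoor_support (mono_succ hτ)
      push_neg at hc
      rcases le_or_gt (τ 1) x with h | h
      · right; simpa [Fin.succ_mk] using hc (by simpa [Fin.succ_zero_eq_one] using h)
      · left; simpa [Fin.succ_zero_eq_one] using h
    calc |_| ≤ _ := abs_add_le _ _
      _ ≤ 2 ^ q + 2 ^ q := add_le_add hb1 hb2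
      _ = 2 ^ (q + 1) := by ring

noncomputable def dSpline : (p : ℕ) → (Fin (p + 2) → ℝ) → ℝ → ℝ
  | 0, _, _ => 0
  | p + 1, τ, x =>
      ((p : ℝ) + 1) *
        (sinv (τ ⟨p + 1, by omega⟩ - τ 0) * coxDeBoor p (fun i => τ i.castSucc) x -
          sinv (τ ⟨p + 2, by omega⟩ - τ 1) * coxDeBoor p (fun i => τ i.succ) x)

lemma dSpline_succ (p : ℕ) (τ : Fin (p + 3) → ℝ) (x : ℝ) :
    dSpline (p + 1) τ x =
      ((p : ℝ) + 1) *
        (sinv (τ ⟨p + 1, by omega⟩ - τ 0) * coxDeBoor p (fun i => τ i.castSucc) x -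
          sinv (τ ⟨p + 2, by omega⟩ - τ 1) * coxDeBoor p (fun i => τ i.succ) x) := rfl

lemma dSpline_identity (p : ℕ) (τ : Fin (p + 3) → ℝ) (hτ : Monotone τ) (x : ℝ) :
    (x - τ 0) * sinv (τ ⟨p + 1, by omega⟩ - τ 0) * dSpline p (fun i => τ i.castSucc) x +
    (τ ⟨p + 2, by omega⟩ - x) * sinv (τ ⟨p + 2, by omega⟩ - τ 1) *
      dSpline p (fun i => τ i.succ) x =
    (p : ℝ) * (sinv (τ ⟨p + 1, by omega⟩ - τ 0) * coxDeBoor p (fun i => τ i.castSucc) x -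
      sinv (τ ⟨p + 2, by omega⟩ - τ 1) * coxDeBoor p (fun i => τ i.succ) x) := by
  match p with
  | 0 => simp [dSpline]
  | q + 1 =>
    have e1 : (⟨q + 1 + 1, by omega⟩ : Fin (q + 4)) = ⟨q + 2, by omega⟩ := rfl
    have e2 : (⟨q + 1 + 2, by omega⟩ : Fin (q + 4)) = ⟨q + 3, by omega⟩ := rfl
    rw [e1, e2]
    simp only [dSpline_succ, coxDeBoor_succ]
    simp only [Fin.succ_castSucc, Fin.castSucc_mk, Fin.succ_mk, Fin.castSucc_zero,
      Fin.castSucc_one, Fin.succ_zero_eq_one, Fin.succ_one_eq_two]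
    set A := coxDeBoor q (fun i => τ i.castSucc.castSucc) x with hA
    set C := coxDeBoor q (fun i => τ i.succ.castSucc) x with hC
    set E := coxDeBoor q (fun i => τ i.succ.succ) x with hE
    set a := τ 0
    set b := τ 1
    set f := τ 2
    set e := τ ⟨q + 1, by omega⟩
    set c := τ ⟨q + 2, by omega⟩
    set d := τ ⟨q + 3, by omega⟩
    by_cases hbc : c - b = 0
    · have h0 : sinv (c - b) = 0 := by rw [hbc]; simp [sinv]
      rw [h0]; push_cast; ring
    · have hb_le_c : b ≤ c := hτ (by simp [Fin.le_def])
      have ha_le_b : a ≤ b := hτ (by simp [Fin.le_def])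
      have hc_le_d : c ≤ d := hτ (by simp [Fin.le_def])
      have hca : c - a ≠ 0 := by intro h; apply hbc; linarith [sub_eq_zero.mp h]
      have hdb : d - b ≠ 0 := by intro h; apply hbc; linarith [sub_eq_zero.mp h]
      rw [sinv_of_ne hca, sinv_of_ne hdb]
      field_simp
      push_cast
      ring

theorem coxDeBoor_hasDerivAt_offknot : ∀ {p : ℕ} {τ : Fin (p + 2) → ℝ}, Monotone τ →
    ∀ {x : ℝ}, (∀ i, τ i ≠ x) →
    HasDerivAt (coxDeBoor p τ) (dSpline p τ x) x := by
  intro p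
  induction p with
  | zero =>
    intro τ hτ x hx
    show HasDerivAt _ (0 : ℝ) x
    by_cases hc : τ 0 ≤ x ∧ x < τ 1
    · have h1 : τ 0 < x := lt_of_le_of_ne hc.1 (hx 0)
      have heq : coxDeBoor 0 τ =ᶠ[nhds x] fun _ => (1:ℝ) := by
        filter_upwards [Ioo_mem_nhds h1 hc.2] with y hy
        show (if τ 0 ≤ y ∧ y < τ 1 then (1:ℝ) else 0) = 1
        rw [if_pos ⟨hy.1.le, hy.2⟩]
      exact heq.hasDerivAt_iff.mpr (hasDerivAt_const x 1)
    · have heq : coxDeBoor 0 τ =ᶠ[nhds x] fun _ => (0:ℝ) := by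
        rcases not_and_or.mp hc with h | h
        · have h1 : x < τ 0 := lt_of_not_ge h
          filter_upwards [Iio_mem_nhds h1] with y hy
          show (if τ 0 ≤ y ∧ y < τ 1 then (1:ℝ) else 0) = 0
          rw [if_neg (fun hcc => absurd hcc.1 (not_le.mpr hy))]
        · have h1 : τ 1 < x := lt_of_le_of_ne (not_lt.mp h) (hx 1)
          filter_upwards [Ioi_mem_nhds h1] with y hy
          show (if τ 0 ≤ y ∧ y < τ 1 then (1:ℝ) else 0) = 0
          rw [if_neg (fun hcc => absurd hcc.2 (not_lt.mpr (le_of_lt hy)))]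
      exact heq.hasDerivAt_iff.mpr (hasDerivAt_const x 0)
  | succ q ih =>
    intro τ hτ x hx
    rw [coxDeBoor_succ]
    have hL := ih (mono_castSucc hτ) (x := x) (fun i => hx i.castSucc)
    have hR := ih (mono_succ hτ) (x := x) (fun i => hx i.succ)
    have h1 : HasDerivAt (fun y => (y - τ 0) * sinv (τ ⟨q + 1, by omega⟩ - τ 0))
        (sinv (τ ⟨q + 1, by omega⟩ - τ 0)) x := by
      simpa using ((hasDerivAt_id x).sub_const (τ 0)).mul_const _
    have h2 : HasDerivAt (fun y => (τ ⟨q + 2, by omega⟩ - y) * sinv (τ ⟨q + 2, by omega⟩ - τ 1))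
        (-sinv (τ ⟨q + 2, by omega⟩ - τ 1)) x := by
      simpa using ((hasDerivAt_id x).const_sub (τ ⟨q + 2, by omega⟩)).mul_const
        (sinv (τ ⟨q + 2, by omega⟩ - τ 1))
    have total := (h1.mul hL).add (h2.mul hR)
    refine total.congr_deriv (Eq.symm ?_)
    rw [dSpline_succ]
    have hid := dSpline_identity q τ hτ x
    push_cast
    linear_combination (-1 : ℝ) * hid

lemma card_castSucc_le {n : ℕ} (τ : Fin (n + 1) → ℝ) (r : ℝ) :
    (Finset.univ.filter fun i : Fin n => τ i.castSucc = r).card ≤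
      (Finset.univ.filter fun i : Fin (n + 1) => τ i = r).card := by
  apply Finset.card_le_card_of_injOn Fin.castSucc
  · intro i hi; simp only [Finset.coe_filter, Finset.mem_filter, Finset.mem_univ, true_and, Set.mem_setOf_eq] at hi ⊢; exact hi
  · exact fun a _ b _ h => Fin.castSucc_injective _ h

lemma card_succ_le {n : ℕ} (τ : Fin (n + 1) → ℝ) (r : ℝ) :
    (Finset.univ.filter fun i : Fin n => τ i.succ = r).card ≤
      (Finset.univ.filter fun i : Fin (n + 1) => τ i = r).card := by
  apply Finset.card_le_card_of_injOn Fin.succ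
  · intro i hi; simp only [Finset.coe_filter, Finset.mem_filter, Finset.mem_univ, true_and, Set.mem_setOf_eq] at hi ⊢; exact hi
  · exact fun a _ b _ h => Fin.succ_injective _ h

lemma block_lemma {n : ℕ} {σ : Fin (n + 2) → ℝ} (hσ : Monotone σ) {x : ℝ}
    (h : (Finset.univ.filter fun i => σ i = x).card = n + 1) :
    (σ 0 ≠ x ∧ ∀ i, i ≠ 0 → σ i = x) ∨
    (σ ⟨n + 1, by omega⟩ ≠ x ∧ ∀ i, i ≠ ⟨n + 1, by omega⟩ → σ i = x) := by
  have hneg : (Finset.univ.filter fun i => ¬(σ i = x)).card = 1 := by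
    have := Finset.card_filter_add_card_filter_not
      (s := (Finset.univ : Finset (Fin (n + 2)))) (p := fun i => σ i = x)
    simp only [Finset.card_univ, Fintype.card_fin] at this
    omega
  obtain ⟨j, hj⟩ := Finset.card_eq_one.mp hneg
  have hall : ∀ i, i ≠ j → σ i = x := by
    intro i hi
    by_contra hc
    have : i ∈ Finset.univ.filter fun i => ¬(σ i = x) := by simp [hc]
    rw [hj, Finset.mem_singleton] at this
    exact hi this
  have hjx : σ j ≠ x := by
    have : j ∈ Finset.univ.filter fun i => ¬(σ i = x) := by rw [hj]; exact Finset.mem_singleton_self j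
    simpa using this
  by_cases hj0 : j = 0
  · left; subst hj0; exact ⟨hjx, hall⟩
  · by_cases hjl : j = ⟨n + 1, by omega⟩
    · right; subst hjl; exact ⟨hjx, hall⟩
    · exfalso
      apply hjx
      have h0 : σ 0 = x := hall 0 (fun hc => hj0 hc.symm)
      have hl : σ ⟨n + 1, by omega⟩ = x := hall _ (fun hc => hjl hc.symm)
      have h1 : σ 0 ≤ σ j := hσ (Fin.zero_le j)
      have h2 : σ j ≤ σ ⟨n + 1, by omega⟩ := hσ (by simp [Fin.le_def]; omega)
      rw [h0] at h1; rw [hl] at h2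
      linarith

lemma coxDeBoor_left_ramp : ∀ {p : ℕ} {τ : Fin (p + 2) → ℝ},
    (∀ i : Fin (p + 2), i ≠ 0 → τ i = τ ⟨p + 1, by omega⟩) → ∀ {y : ℝ},
    τ 0 ≤ y → y < τ ⟨p + 1, by omega⟩ →
    coxDeBoor p τ y = ((y - τ 0) / (τ ⟨p + 1, by omega⟩ - τ 0)) ^ p := by
  intro p
  induction p with
  | zero =>
    intro τ hτ y h0 h1
    have he : (⟨0 + 1, by omega⟩ : Fin 2) = 1 := rfl
    rw [he] at h1
    show (if τ 0 ≤ y ∧ y < τ 1 then (1:ℝ) else 0) = _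
    rw [if_pos ⟨h0, h1⟩]
    simp
  | succ q ih =>
    intro τ hτ y h0 h1
    rw [coxDeBoor_succ_apply]
    have he2 : (⟨q + 1 + 1, by omega⟩ : Fin (q + 3)) = ⟨q + 2, by omega⟩ := rfl
    rw [he2] at h1 hτ ⊢
    have hc1 : τ 1 = τ ⟨q + 2, by omega⟩ := hτ 1 (by simp [Fin.ext_iff])
    have hcq : τ ⟨q + 1, by omega⟩ = τ ⟨q + 2, by omega⟩ := hτ _ (by simp [Fin.ext_iff])
    have h2 : sinv (τ ⟨q + 2, by omega⟩ - τ 1) = 0 := by rw [hc1]; simp [sinv]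
    have hLlast : (fun i : Fin (q + 2) => τ i.castSucc) ⟨q + 1, by omega⟩
        = τ ⟨q + 2, by omega⟩ := by simp only [Fin.castSucc_mk]; exact hcq
    have hIH : coxDeBoor q (fun i => τ i.castSucc) y
        = ((y - τ 0) / (τ ⟨q + 2, by omega⟩ - τ 0)) ^ q := by
      rw [ih (τ := fun i => τ i.castSucc) ?hyp ?hh0 ?hh1]
      · simp only [Fin.castSucc_mk, Fin.castSucc_zero, hcq]
      case hyp =>
        intro i hi
        rw [show τ (Fin.castSucc ⟨q + 1, by omega⟩) = τ ⟨q + 2, by omega⟩ from hLlast]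
        exact hτ i.castSucc (by simpa [Fin.castSucc_eq_zero_iff] using hi)
      case hh0 => simpa [Fin.castSucc_zero] using h0
      case hh1 => rw [show τ (Fin.castSucc ⟨q + 1, by omega⟩) = τ ⟨q + 2, by omega⟩ from hLlast]; exact h1
    rw [hIH, h2, hcq]
    have hne : τ ⟨q + 2, by omega⟩ - τ 0 ≠ 0 := by
      have := h0.trans_lt h1; intro hc; nlinarith
    rw [sinv_of_ne hne]
    ring

lemma coxDeBoor_right_ramp : ∀ {p : ℕ} {τ : Fin (p + 2) → ℝ},
    (∀ i : Fin (p + 2), i ≠ ⟨p + 1, by omega⟩ → τ i = τ 0) → ∀ {y : ℝ},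
    τ 0 ≤ y → y < τ ⟨p + 1, by omega⟩ →
    coxDeBoor p τ y = ((τ ⟨p + 1, by omega⟩ - y) / (τ ⟨p + 1, by omega⟩ - τ 0)) ^ p := by
  intro p
  induction p with
  | zero =>
    intro τ hτ y h0 h1
    have he : (⟨0 + 1, by omega⟩ : Fin 2) = 1 := rfl
    rw [he] at h1 ⊢
    show (if τ 0 ≤ y ∧ y < τ 1 then (1:ℝ) else 0) = _
    rw [if_pos ⟨h0, h1⟩]
    simp
  | succ q ih =>
    intro τ hτ y h0 h1
    rw [coxDeBoor_succ_apply]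
    have he2 : (⟨q + 1 + 1, by omega⟩ : Fin (q + 3)) = ⟨q + 2, by omega⟩ := rfl
    rw [he2] at h1 hτ ⊢
    have hcq : τ ⟨q + 1, by omega⟩ = τ 0 := hτ _ (by simp [Fin.ext_iff])
    have hc1 : τ 1 = τ 0 := hτ 1 (by simp [Fin.ext_iff])
    have h2 : sinv (τ ⟨q + 1, by omega⟩ - τ 0) = 0 := by rw [hcq]; simp [sinv]
    have hRlast : (fun i : Fin (q + 2) => τ i.succ) ⟨q + 1, by omega⟩
        = τ ⟨q + 2, by omega⟩ := by simp [Fin.succ_mk]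
    have hR0 : (fun i : Fin (q + 2) => τ i.succ) 0 = τ 0 := by
      simp only [Fin.succ_zero_eq_one]; exact hc1
    have hIH : coxDeBoor q (fun i => τ i.succ) y
        = ((τ ⟨q + 2, by omega⟩ - y) / (τ ⟨q + 2, by omega⟩ - τ 0)) ^ q := by
      rw [ih (τ := fun i => τ i.succ) ?hyp ?hh0 ?hh1]
      · have e3 : (⟨q + 1, by omega⟩ : Fin (q + 2)).succ = (⟨q + 2, by omega⟩ : Fin (q + 3)) := rfl
        rw [e3, Fin.succ_zero_eq_one, hc1]
      case hyp =>
        intro i hi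
        show τ i.succ = τ (Fin.succ 0)
        rw [Fin.succ_zero_eq_one, hc1]
        apply hτ i.succ
        simp only [ne_eq, Fin.ext_iff, Fin.val_succ] at hi ⊢
        omega
      case hh0 => rw [show τ (Fin.succ 0) = τ 0 from hR0]; exact h0
      case hh1 => rw [show τ (Fin.succ ⟨q + 1, by omega⟩) = τ ⟨q + 2, by omega⟩ from hRlast]; exact h1
    rw [hIH, h2, hc1]
    have hne : τ ⟨q + 2, by omega⟩ - τ 0 ≠ 0 := by
      have := h0.trans_lt h1; intro hc; nlinarith
    rw [sinv_of_ne hne]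
    ring

lemma squeeze_contAt {g : ℝ → ℝ} {x s : ℝ} {M : ℝ} (hg : ∀ y, |g y| ≤ M) :
    ContinuousAt (fun y => (y - x) * s * g y) x := by
  have h0 : (fun y => (y - x) * s * g y) x = 0 := by simp
  unfold ContinuousAt
  rw [h0]
  apply squeeze_zero_norm (a := fun y => |y - x| * (|s| * M))
  · intro y
    show |(y - x) * s * g y| ≤ _
    rw [abs_mul, abs_mul, mul_assoc]
    apply mul_le_mul_of_nonneg_left _ (abs_nonneg _)
    apply mul_le_mul_of_nonneg_left (hg y) (abs_nonneg _)
  · have h1 : Tendsto (fun y : ℝ => |y - x| * (|s| * M)) (nhds x) (nhds (|x - x| * (|s| * M))) :=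
      (((continuous_id.sub continuous_const).abs).mul continuous_const).tendsto x
    simpa using h1

lemma squeeze_contAt' {g : ℝ → ℝ} {x s : ℝ} {M : ℝ} (hg : ∀ y, |g y| ≤ M) :
    ContinuousAt (fun y => (x - y) * s * g y) x := by
  have : (fun y => (x - y) * s * g y) = fun y => (y - x) * (-s) * g y := by
    funext y; ring
  rw [this]
  exact squeeze_contAt hg

theorem coxDeBoor_contAt : ∀ {p : ℕ} {τ : Fin (p + 2) → ℝ}, Monotone τ → ∀ {x : ℝ},
    (Finset.univ.filter (fun i => τ i = x)).card ≤ p → ContinuousAt (coxDeBoor p τ) x := by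
  intro p
  induction p with
  | zero =>
    intro τ hτ x hx
    have h : ∀ i, τ i ≠ x := by
      intro i hi
      have hm : i ∈ Finset.univ.filter (fun i => τ i = x) := by simp [hi]
      have := Finset.card_pos.mpr ⟨i, hm⟩
      omega
    by_cases hc : τ 0 ≤ x ∧ x < τ 1
    · have h1 : τ 0 < x := lt_of_le_of_ne hc.1 (h 0)
      apply Filter.EventuallyEq.continuousAt (y := (1:ℝ))
      filter_upwards [Ioo_mem_nhds h1 hc.2] with y hy
      show (if τ 0 ≤ y ∧ y < τ 1 then (1:ℝ) else 0) = 1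
      rw [if_pos ⟨hy.1.le, hy.2⟩]
    · apply Filter.EventuallyEq.continuousAt (y := (0:ℝ))
      rcases not_and_or.mp hc with h1 | h1
      · have h1 : x < τ 0 := lt_of_not_ge h1
        filter_upwards [Iio_mem_nhds h1] with y hy
        show (if τ 0 ≤ y ∧ y < τ 1 then (1:ℝ) else 0) = 0
        rw [if_neg (fun hcc => absurd hcc.1 (not_le.mpr hy))]
      · have h1 : τ 1 < x := lt_of_le_of_ne (not_lt.mp h1) (h 1)
        filter_upwards [Ioi_mem_nhds h1] with y hy
        show (if τ 0 ≤ y ∧ y < τ 1 then (1:ℝ) else 0) = 0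
        rw [if_neg (fun hcc => absurd hcc.2 (not_lt.mpr hy.le))]
  | succ q ih =>
    intro τ hτ x hx
    have hkLle : (Finset.univ.filter (fun i : Fin (q+2) => τ i.castSucc = x)).card ≤ q + 1 :=
      le_trans (card_castSucc_le τ x) hx
    have hkRle : (Finset.univ.filter (fun i : Fin (q+2) => τ i.succ = x)).card ≤ q + 1 :=
      le_trans (card_succ_le τ x) hx
    by_cases hkL : (Finset.univ.filter (fun i : Fin (q+2) => τ i.castSucc = x)).card ≤ q
    · by_cases hkR : (Finset.univ.filter (fun i : Fin (q+2) => τ i.succ = x)).card ≤ q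
      · rw [coxDeBoor_succ]
        exact (((continuousAt_id.sub continuousAt_const).mul continuousAt_const).mul
            (ih (mono_castSucc hτ) hkL)).add
          (((continuousAt_const.sub continuousAt_id).mul continuousAt_const).mul
            (ih (mono_succ hτ) hkR))
      · -- kR = q + 1
        have hkR' : (Finset.univ.filter (fun i : Fin (q+2) => τ i.succ = x)).card = q + 1 := by
          omega
        rcases block_lemma (mono_succ hτ) hkR' with ⟨hne0, hall⟩ | ⟨hnel, hall⟩
        · -- τ (succ 0) = τ 1 ≠ x and τ i.succ = x for i ≠ 0; in particular τ ⟨q+2⟩ = x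
          have hlast : τ ⟨q + 2, by omega⟩ = x := by
            have h' := hall ⟨q + 1, by omega⟩ (by simp [Fin.ext_iff])
            simpa [Fin.succ_mk] using h'
          rw [coxDeBoor_succ]
          apply ContinuousAt.add
          · exact ((continuousAt_id.sub continuousAt_const).mul continuousAt_const).mul
              (ih (mono_castSucc hτ) hkL)
          · rw [hlast]
            exact squeeze_contAt' (fun y => coxDeBoor_abs_le (mono_succ hτ) y)
        · -- τ i.succ = x for all i ≠ last; then kL ≥ q+1, contradiction
          exfalso
          have hsub : (Finset.univ.erase (0 : Fin (q+2))) ⊆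
              Finset.univ.filter (fun i : Fin (q+2) => τ i.castSucc = x) := by
            intro i hi
            simp only [Finset.mem_erase, Finset.mem_univ, and_true] at hi
            simp only [Finset.mem_filter, Finset.mem_univ, true_and]
            obtain ⟨iv, hivlt⟩ := i
            have hiv1 : 1 ≤ iv := by
              rcases Nat.eq_zero_or_pos iv with h0 | h0
              · exfalso; apply hi; simp [Fin.ext_iff, h0]
              · omega
            have h' := hall ⟨iv - 1, by omega⟩ (by simp [Fin.ext_iff]; omega)
            simp only [Fin.succ_mk] at h'
            simp only [Fin.castSucc_mk]
            convert h' using 3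
            omega
          have hcard := Finset.card_le_card hsub
          rw [Finset.card_erase_of_mem (Finset.mem_univ 0), Finset.card_univ] at hcard
          simp only [Fintype.card_fin] at hcard
          omega
    · -- kL = q + 1
      have hkL' : (Finset.univ.filter (fun i : Fin (q+2) => τ i.castSucc = x)).card = q + 1 := by
        omega
      rcases block_lemma (mono_castSucc hτ) hkL' with ⟨hne0, hall⟩ | ⟨hnel, hall⟩
      · -- SPIKE case : τ 0 ≠ x, τ 1 = … = τ ⟨q+1⟩ = x
        have hx' : (Finset.univ.filter (fun i : Fin (q+3) => τ i = x)).card ≤ q + 1 := hx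
        have hne0' : τ 0 ≠ x := by simpa using hne0
        have hmid : ∀ k : ℕ, (h1 : 1 ≤ k) → (h2 : k ≤ q + 1) → τ ⟨k, by omega⟩ = x := by
          intro k h1 h2
          have h' := hall ⟨k, by omega⟩ (by simp [Fin.ext_iff]; omega)
          simpa [Fin.castSucc_mk] using h'
        have h1x : τ 1 = x := by
          have := hmid 1 le_rfl (by omega)
          simpa using this
        have hqx : τ ⟨q + 1, by omega⟩ = x := hmid (q+1) (by omega) le_rfl
        have ha : τ 0 < x := lt_of_le_of_ne (h1x ▸ hτ (by simp [Fin.le_def])) hne0'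
        have hd : x < τ ⟨q + 2, by omega⟩ := by
          have hge : x ≤ τ ⟨q + 2, by omega⟩ := hqx ▸ hτ (by simp [Fin.le_def])
          rcases lt_or_eq_of_le hge with h | h
          · exact h
          · exfalso
            have hsub : (Finset.univ.erase (0 : Fin (q+3))) ⊆
                Finset.univ.filter (fun i : Fin (q+3) => τ i = x) := by
              intro i hi
              simp only [Finset.mem_erase, Finset.mem_univ, and_true] at hi
              simp only [Finset.mem_filter, Finset.mem_univ, true_and]
              obtain ⟨iv, hivlt⟩ := i
              have hiv1 : 1 ≤ iv := by
                rcases Nat.eq_zero_or_pos iv with h0 | h0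
                · exfalso; apply hi; simp [Fin.ext_iff, h0]
                · omega
              rcases Nat.lt_or_ge iv (q + 2) with hlt | hge'
              · exact hmid iv hiv1 (by omega)
              · have : iv = q + 2 := by omega
                subst this
                exact h.symm
            have hcard := Finset.card_le_card hsub
            rw [Finset.card_erase_of_mem (Finset.mem_univ 0), Finset.card_univ] at hcard
            simp only [Fintype.card_fin] at hcard
            omega
        -- value at x is 1
        have hRhyp : ∀ i : Fin (q+2), i ≠ ⟨q + 1, by omega⟩ →
            (fun i : Fin (q+2) => τ i.succ) i = (fun i : Fin (q+2) => τ i.succ) 0 := by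
          intro i hi
          show τ i.succ = τ (Fin.succ 0)
          rw [Fin.succ_zero_eq_one, h1x]
          obtain ⟨iv, hivlt⟩ := i
          simp only [ne_eq, Fin.mk.injEq] at hi
          simp only [Fin.succ_mk]
          exact hmid (iv + 1) (by omega) (by omega)
        have hR0x : τ (Fin.succ (0 : Fin (q+2))) = x := by
          rw [Fin.succ_zero_eq_one, h1x]
        have hRlast : τ (⟨q + 1, by omega⟩ : Fin (q+2)).succ
            = τ ⟨q + 2, by omega⟩ := by simp [Fin.succ_mk]
        have hLlast : τ (⟨q + 1, by omega⟩ : Fin (q+2)).castSucc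
            = x := by simp only [Fin.castSucc_mk]; exact hqx
        have hBx : coxDeBoor (q+1) τ x = 1 := by
          rw [coxDeBoor_succ_apply]
          have hL0 : coxDeBoor q (fun i => τ i.castSucc) x = 0 := by
            apply coxDeBoor_support (mono_castSucc hτ)
            right
            beta_reduce
            rw [hLlast]
          have hRx : coxDeBoor q (fun i => τ i.succ) x
              = ((τ ⟨q + 2, by omega⟩ - x) / (τ ⟨q + 2, by omega⟩ - x)) ^ q := by
            have := coxDeBoor_right_ramp (τ := fun i : Fin (q+2) => τ i.succ) hRhyp
              (y := x) (by beta_reduce; rw [hR0x]) (by beta_reduce; rw [hRlast]; exact hd)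
            rw [this]; beta_reduce; rw [hRlast, hR0x]
          have hdx : τ ⟨q + 2, by omega⟩ - x ≠ 0 := ne_of_gt (sub_pos.mpr hd)
          rw [hL0, hRx, h1x, div_self hdx, one_pow, sinv_of_ne hdx, mul_zero, mul_one,
            zero_add, mul_inv_cancel₀ hdx]
        unfold ContinuousAt
        rw [hBx, ← nhdsLT_sup_nhdsGE x, tendsto_sup]
        constructor
        · -- from the left
          apply Tendsto.congr' (f₁ := fun y => ((y - τ 0) / (x - τ 0)) ^ (q+1))
          · filter_upwards [Ioo_mem_nhdsLT_of_mem (⟨ha, le_refl x⟩ : x ∈ Set.Ioc (τ 0) x)]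
              with y hy
            rw [coxDeBoor_succ_apply]
            have hRy : coxDeBoor q (fun i => τ i.succ) y = 0 := by
              apply coxDeBoor_support (mono_succ hτ)
              left
              beta_reduce
              rw [hR0x]
              exact hy.2
            have hLy : coxDeBoor q (fun i => τ i.castSucc) y
                = ((y - τ 0) / (x - τ 0)) ^ q := by
              have := coxDeBoor_left_ramp (τ := fun i : Fin (q+2) => τ i.castSucc)
                (fun i hi => by beta_reduce; rw [hLlast]; exact hall i hi)
                (y := y) (by simpa using hy.1.le) (by beta_reduce; rw [hLlast]; exact hy.2)
              rw [this]; beta_reduce; rw [hLlast]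
              simp
            rw [hLy, hRy, hqx, sinv_of_ne (by intro hc; nlinarith)]
            ring
          · have ht : Tendsto (fun y : ℝ => ((y - τ 0) / (x - τ 0)) ^ (q+1)) (nhds x)
                (nhds (((x - τ 0) / (x - τ 0)) ^ (q+1))) :=
              (((continuous_id.sub continuous_const).div_const _).pow _).tendsto x
            rw [div_self (by intro hc; nlinarith), one_pow] at ht
            exact ht.mono_left nhdsWithin_le_nhds
        · -- from the right
          apply Tendsto.congr'
            (f₁ := fun y => ((τ ⟨q + 2, by omega⟩ - y) / (τ ⟨q + 2, by omega⟩ - x)) ^ (q+1))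
          · filter_upwards [Ico_mem_nhdsGE_of_mem (⟨le_refl x, hd⟩ : x ∈ Set.Ico x (τ ⟨q + 2, by omega⟩))]
              with y hy
            rw [coxDeBoor_succ_apply]
            have hLy : coxDeBoor q (fun i => τ i.castSucc) y = 0 := by
              apply coxDeBoor_support (mono_castSucc hτ)
              right
              beta_reduce
              rw [hLlast]
              exact hy.1
            have hRy : coxDeBoor q (fun i => τ i.succ) y
                = ((τ ⟨q + 2, by omega⟩ - y) / (τ ⟨q + 2, by omega⟩ - x)) ^ q := by
              have := coxDeBoor_right_ramp (τ := fun i : Fin (q+2) => τ i.succ) hRhyp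
                (y := y) (by beta_reduce; rw [hR0x]; exact hy.1) (by beta_reduce; rw [hRlast]; exact hy.2)
              rw [this]; beta_reduce; rw [hRlast, hR0x]
            have hdx : τ ⟨q + 2, by omega⟩ - x ≠ 0 := ne_of_gt (sub_pos.mpr hd)
            rw [hLy, hRy, h1x, sinv_of_ne hdx]
            ring
          · have ht : Tendsto (fun y : ℝ => ((τ ⟨q + 2, by omega⟩ - y) / (τ ⟨q + 2, by omega⟩ - x)) ^ (q+1)) (nhds x)
                (nhds (((τ ⟨q + 2, by omega⟩ - x) / (τ ⟨q + 2, by omega⟩ - x)) ^ (q+1))) :=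
              (((continuous_const.sub continuous_id).div_const _).pow _).tendsto x
            rw [div_self (by intro hc; nlinarith), one_pow] at ht
            exact ht.mono_left nhdsWithin_le_nhds
      · -- τ 0 = x, squeeze on first term
        have hx0 : τ 0 = x := by
          have h' := hall 0 (by simp [Fin.ext_iff])
          simpa using h'
        have hqlast : τ ⟨q + 1, by omega⟩ ≠ x := by
          simpa [Fin.castSucc_mk] using hnel
        have hqprev : τ ⟨q, by omega⟩ = x := by
          have h' := hall ⟨q, by omega⟩ (by simp [Fin.ext_iff])
          simpa [Fin.castSucc_mk] using h'
        have hgt : x < τ ⟨q + 1, by omega⟩ :=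
          lt_of_le_of_ne (hqprev ▸ hτ (by simp [Fin.le_def])) (Ne.symm hqlast)
        have hgt2 : x < τ ⟨q + 2, by omega⟩ :=
          lt_of_lt_of_le hgt (hτ (by simp [Fin.le_def]))
        have hkR : (Finset.univ.filter (fun i : Fin (q+2) => τ i.succ = x)).card ≤ q := by
          have hsub : Finset.univ.filter (fun i : Fin (q+2) => τ i.succ = x) ⊆
              (Finset.univ.erase (⟨q, by omega⟩ : Fin (q+2))).erase ⟨q+1, by omega⟩ := by
            intro i hi
            simp only [Finset.mem_filter, Finset.mem_univ, true_and] at hi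
            simp only [Finset.mem_erase, Finset.mem_univ, and_true]
            obtain ⟨iv, hivlt⟩ := i
            simp only [Fin.succ_mk] at hi
            constructor
            · intro hc
              rw [Fin.ext_iff] at hc
              simp only at hc
              subst hc
              exact absurd hi (by rw [show (⟨q+1+1, by omega⟩ : Fin (q+3)) = ⟨q+2, by omega⟩ from rfl]; intro hc2; nlinarith)
            · intro hc
              rw [Fin.ext_iff] at hc
              simp only at hc
              subst hc
              exact absurd hi (by intro hc2; nlinarith)
          have hcard := Finset.card_le_card hsub
          rw [Finset.card_erase_of_mem, Finset.card_erase_of_mem (Finset.mem_univ _),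
            Finset.card_univ] at hcard
          · simp only [Fintype.card_fin] at hcard; omega
          · simp only [Finset.mem_erase, Finset.mem_univ, and_true]
            simp [Fin.ext_iff]
        rw [coxDeBoor_succ]
        apply ContinuousAt.add
        · rw [hx0]
          exact squeeze_contAt (fun y => coxDeBoor_abs_le (mono_castSucc hτ) y)
        · exact ((continuousAt_const.sub continuousAt_id).mul continuousAt_const).mul
            (ih (mono_succ hτ) hkR)

lemma hasDerivAt_of_local {f g : ℝ → ℝ} {x : ℝ} {U : Set ℝ} (hU : U ∈ nhds x)
    (hf : Continuous f) (hg : ContinuousAt g x)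
    (hd : ∀ y ∈ U, y ≠ x → HasDerivAt f (g y) y) : HasDerivAt f (g x) x := by
  obtain ⟨δ₂, hδ₂, hball⟩ := Metric.mem_nhds_iff.mp hU
  rw [hasDerivAt_iff_tendsto_slope, Metric.tendsto_nhdsWithin_nhds]
  intro ε hε
  obtain ⟨δ₁, hδ₁, hgε⟩ := Metric.tendsto_nhds_nhds.mp hg ε hε
  refine ⟨min δ₁ δ₂, lt_min hδ₁ hδ₂, ?_⟩
  intro y hy hyd
  have hyne : y ≠ x := hy
  rw [Real.dist_eq] at hyd
  have hyd1 : |y - x| < δ₁ := lt_of_lt_of_le hyd (min_le_left _ _)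
  have hyd2 : |y - x| < δ₂ := lt_of_lt_of_le hyd (min_le_right _ _)
  have habs := abs_lt.mp hyd2
  have habs1 := abs_lt.mp hyd1
  rcases lt_or_gt_of_ne hyne with hlt | hgt
  · have hder : ∀ z ∈ Set.Ioo y x, HasDerivAt f (g z) z := by
      intro z hz
      refine hd z (hball ?_) (ne_of_lt hz.2)
      rw [Metric.mem_ball, Real.dist_eq, abs_lt]
      exact ⟨by linarith [hz.1, hz.2], by linarith [hz.1, hz.2]⟩
    obtain ⟨c, hc, hceq⟩ := exists_hasDerivAt_eq_slope f g hlt hf.continuousOn hder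
    have hdc : dist c x < δ₁ := by
      rw [Real.dist_eq, abs_lt]
      exact ⟨by linarith [hc.1, hc.2], by linarith [hc.1, hc.2]⟩
    have heq : slope f x y = g c := by
      rw [slope_comm, slope_def_field, hceq]
    rw [heq]
    exact hgε hdc
  · have hder : ∀ z ∈ Set.Ioo x y, HasDerivAt f (g z) z := by
      intro z hz
      refine hd z (hball ?_) (ne_of_gt hz.1)
      rw [Metric.mem_ball, Real.dist_eq, abs_lt]
      exact ⟨by linarith [hz.1, hz.2], by linarith [hz.1, hz.2]⟩
    obtain ⟨c, hc, hceq⟩ := exists_hasDerivAt_eq_slope f g hgt hf.continuousOn hder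
    have hdc : dist c x < δ₁ := by
      rw [Real.dist_eq, abs_lt]
      exact ⟨by linarith [hc.1, hc.2], by linarith [hc.1, hc.2]⟩
    have heq : slope f x y = g c := by
      rw [slope_def_field, hceq]
    rw [heq]
    exact hgε hdc

theorem coxDeBoor_hasDerivAt {p : ℕ} {τ : Fin (p + 3) → ℝ} (hτ : Monotone τ)
    (hmult : ∀ r : ℝ, (Finset.univ.filter (fun i : Fin (p + 3) => τ i = r)).card ≤ p)
    (x : ℝ) : HasDerivAt (coxDeBoor (p + 1) τ) (dSpline (p + 1) τ x) x := by
  have hfc : Continuous (coxDeBoor (p + 1) τ) := by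
    rw [continuous_iff_continuousAt]
    intro y
    exact coxDeBoor_contAt hτ (le_trans (hmult y) (by omega))
  have hg : ContinuousAt (dSpline (p + 1) τ) x := by
    have hrfl : dSpline (p + 1) τ = fun y => ((p : ℝ) + 1) *
        (sinv (τ ⟨p + 1, by omega⟩ - τ 0) * coxDeBoor p (fun i => τ i.castSucc) y -
          sinv (τ ⟨p + 2, by omega⟩ - τ 1) * coxDeBoor p (fun i => τ i.succ) y) := rfl
    rw [hrfl]
    exact continuousAt_const.mul
      ((continuousAt_const.mul (coxDeBoor_contAt (mono_castSucc hτ)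
          (le_trans (card_castSucc_le τ x) (hmult x)))).sub
        (continuousAt_const.mul (coxDeBoor_contAt (mono_succ hτ)
          (le_trans (card_succ_le τ x) (hmult x)))))
  by_cases hxk : ∀ i, τ i ≠ x
  · exact coxDeBoor_hasDerivAt_offknot hτ hxk
  · set T : Finset ℝ := Finset.image τ Finset.univ with hT
    have hUopen : IsOpen ((↑(T.erase x) : Set ℝ)ᶜ) :=
      (Set.Finite.isClosed (Finset.finite_toSet _)).isOpen_compl
    have hUx : ((↑(T.erase x) : Set ℝ)ᶜ) ∈ nhds x := hUopen.mem_nhds (by simp)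
    apply hasDerivAt_of_local hUx hfc hg
    intro y hyU hyx
    apply coxDeBoor_hasDerivAt_offknot hτ
    intro i hi
    apply hyU
    simp only [Finset.coe_erase, Set.mem_diff, Finset.mem_coe, Set.mem_singleton_iff]
    refine ⟨?_, hyx⟩
    rw [hT, Finset.mem_image]
    exact ⟨i, Finset.mem_univ i, hi⟩

lemma coxDeBoor_contDiff_aux : ∀ (n : ℕ), ∀ {p m : ℕ} {τ : Fin (p + 2) → ℝ}, Monotone τ →
    1 ≤ m → p = m + n →
    (∀ r : ℝ, (Finset.univ.filter (fun i : Fin (p + 2) => τ i = r)).card ≤ m) →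
    ContDiff ℝ (n : ℕ∞) (coxDeBoor p τ) := by
  intro n
  induction n with
  | zero =>
    intro p m τ hτ hm hpm hmult
    have h0 : (((0:ℕ) : ℕ∞) : WithTop ℕ∞) = 0 := rfl
    rw [h0, contDiff_zero]
    rw [continuous_iff_continuousAt]
    intro y
    exact coxDeBoor_contAt hτ (le_trans (hmult y) (by omega))
  | succ n ih =>
    intro p m τ hτ hm hpm hmult
    obtain ⟨q, rfl⟩ : ∃ q, p = q + 1 := ⟨m + n, by omega⟩
    have hD : ∀ x, HasDerivAt (coxDeBoor (q+1) τ) (dSpline (q+1) τ x) x :=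
      coxDeBoor_hasDerivAt hτ (fun r => le_trans (hmult r) (by omega))
    have hderiv : deriv (coxDeBoor (q+1) τ) = dSpline (q+1) τ := funext fun x => (hD x).deriv
    have hcast : (((n+1 : ℕ) : ℕ∞) : WithTop ℕ∞) = ((n : ℕ∞) : WithTop ℕ∞) + 1 := by
      push_cast
      rfl
    rw [hcast, contDiff_succ_iff_deriv]
    refine ⟨fun x => (hD x).differentiableAt, by simp, ?_⟩
    rw [hderiv]
    have hBL := ih (p := q) (m := m) (mono_castSucc hτ) hm (by omega)
      (fun r => le_trans (card_castSucc_le τ r) (hmult r))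
    have hBR := ih (p := q) (m := m) (mono_succ hτ) hm (by omega)
      (fun r => le_trans (card_succ_le τ r) (hmult r))
    have hrfl : dSpline (q + 1) τ = fun y => ((q : ℝ) + 1) *
        (sinv (τ ⟨q + 1, by omega⟩ - τ 0) * coxDeBoor q (fun i => τ i.castSucc) y -
          sinv (τ ⟨q + 2, by omega⟩ - τ 1) * coxDeBoor q (fun i => τ i.succ) y) := rfl
    rw [hrfl]
    exact contDiff_const.mul ((contDiff_const.mul hBL).sub (contDiff_const.mul hBR))

/-- Smoothness of B-splines: if every value occurs in the local knot vector
`τ₀ ≤ … ≤ τ_{p+1}` with multiplicity at most `m`, where `1 ≤ m ≤ p`, then the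
degree-`p` B-spline is `(p - m)`-times continuously differentiable on `ℝ`. -/
theorem coxDeBoor_contDiff (p m : ℕ) (hm₁ : 1 ≤ m) (hm₂ : m ≤ p)
    (τ : Fin (p + 2) → ℝ) (hτ : Monotone τ)
    (hmult : ∀ r : ℝ, (Finset.univ.filter (fun i : Fin (p + 2) => τ i = r)).card ≤ m) :
    ContDiff ℝ ((p - m : ℕ) : ℕ∞) (coxDeBoor p τ) :=
  coxDeBoor_contDiff_aux (p - m) hτ hm₁ (by omega) hmult
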